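/- Let K be a number field with ring of integers 𝓞_K, let p be a rational prime, and let f be a positive integer. Let P_f be the number of distinct prime ideals of 𝓞_K lying above p with residue degree f over p, and let N_f be the number of monic irreducible polynomials of degree f in 𝔽_p[x]. If P_f > N_f, then for every θ ∈ 𝓞_K with K = ℚ(θ), p divides the index (𝓞_K : ℤ[θ]). -/

import Mathlib

open Polynomial

/-- The canonical ring hom from `ZMod p` into a commutative ring in which `p = 0`. -/
noncomputable def zmodHom (p : ℕ) {S : Type*} [CommRing S] (h : ((p : ℕ) : S) = 0) :
    ZMod p →+* S :=
  (Ideal.Quotient.lift (Ideal.span {((p : ℕ) : ℤ)}) (Int.castRingHom S) (fun a ha => by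
    rw [Ideal.mem_span_singleton] at ha
    obtain ⟨b, rfl⟩ := ha
    simp [h])).comp (Int.quotientSpanNatEquivZMod p).symm.toRingHom

/-- The minimal polynomial over `𝔽_p` of `θ` modulo `J`. -/
noncomputable def residuePoly (p : ℕ) {R : Type*} [CommRing R] (J : Ideal R)
    (h : ((p : ℕ) : R ⧸ J) = 0) (θ : R) : (ZMod p)[X] :=
  letI : Algebra (ZMod p) (R ⧸ J) := (zmodHom p h).toAlgebra
  minpoly (ZMod p) (Ideal.Quotient.mk J θ)

lemma aeval_map_intCast {A : Type*} [CommRing A] {p : ℕ} [Algebra (ZMod p) A]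
    (x : A) (q : ℤ[X]) :
    aeval x (q.map (Int.castRingHom (ZMod p))) = aeval x q := by
  rw [aeval_def, aeval_def, eval₂_map]
  congr 1
  exact RingHom.ext_int _ _

lemma adjoin_quot_top {R : Type*} [CommRing R] {θ : R} {p : ℕ} (hp : p.Prime)
    (hpn : ¬ p ∣ (Subalgebra.toSubmodule (Algebra.adjoin ℤ {θ})).toAddSubgroup.index)
    (J : Ideal R) (hpJ : ((p : ℕ) : R) ∈ J) :
    Algebra.adjoin ℤ {Ideal.Quotient.mk J θ} = ⊤ := by
  set H := (Subalgebra.toSubmodule (Algebra.adjoin ℤ {θ})).toAddSubgroup with hH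
  have hsurj : Function.Surjective (Ideal.Quotient.mk J).toAddMonoidHom :=
    Ideal.Quotient.mk_surjective
  set T := H.map (Ideal.Quotient.mk J).toAddMonoidHom with hT
  have hdvd : T.index ∣ H.index := AddSubgroup.index_map_dvd H hsurj
  have hTtop : T = ⊤ := by
    rw [AddSubgroup.eq_top_iff']
    intro x
    rw [← QuotientAddGroup.eq_zero_iff]
    have hpx : p • x = 0 := by
      have : ((p : ℕ) : R ⧸ J) = 0 := by
        rw [← map_natCast (Ideal.Quotient.mk J)]
        exact Ideal.Quotient.eq_zero_iff_mem.mpr hpJ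
      rw [nsmul_eq_mul, this, zero_mul]
    have h1 : p • ((x : (R ⧸ J) ⧸ T)) = 0 := by
      rw [← QuotientAddGroup.mk_nsmul, hpx, QuotientAddGroup.mk_zero]
    have h2 : addOrderOf ((x : (R ⧸ J) ⧸ T)) ∣ p := addOrderOf_dvd_of_nsmul_eq_zero h1
    have h3 : addOrderOf ((x : (R ⧸ J) ⧸ T)) ∣ T.index := by
      rw [AddSubgroup.index_eq_card]
      exact addOrderOf_dvd_natCard _
    rcases (Nat.Prime.eq_one_or_self_of_dvd hp _ h2) with h4 | h4
    · exact AddMonoid.addOrderOf_eq_one_iff.mp h4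
    · exact absurd ((h4 ▸ h3).trans hdvd) hpn
  rw [eq_top_iff]
  intro x _
  have hxT : x ∈ T := hTtop ▸ AddSubgroup.mem_top x
  obtain ⟨y, hy, rfl⟩ := AddSubgroup.mem_map.mp hxT
  have hy' : y ∈ Algebra.adjoin ℤ {θ} := hy
  rw [Algebra.adjoin_singleton_eq_range_aeval] at hy'
  obtain ⟨q, hq⟩ := hy'
  rw [Algebra.adjoin_singleton_eq_range_aeval]
  refine ⟨q, ?_⟩
  have h5 := Polynomial.aeval_algHom_apply (Ideal.Quotient.mkₐ ℤ J) θ q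
  simp only [Ideal.Quotient.mkₐ_eq_mk] at h5
  show aeval (Ideal.Quotient.mk J θ) q = Ideal.Quotient.mk J y
  rw [h5]
  exact congrArg _ hq

lemma residuePoly_monic_irred {R : Type*} [CommRing R] [Module.Finite ℤ R]
    (p : ℕ) [Fact p.Prime] (J : Ideal R) [J.IsPrime]
    (h : ((p : ℕ) : R ⧸ J) = 0) (θ : R) :
    (residuePoly p J h θ).Monic ∧ Irreducible (residuePoly p J h θ) := by
  letI : Algebra (ZMod p) (R ⧸ J) := (zmodHom p h).toAlgebra
  haveI : Module.Finite ℤ (R ⧸ J) :=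
    Module.Finite.of_surjective (Ideal.Quotient.mkₐ ℤ J).toLinearMap
      (Ideal.Quotient.mkₐ_surjective ℤ J)
  letI : IsScalarTower ℤ (ZMod p) (R ⧸ J) :=
    IsScalarTower.of_algebraMap_eq' (RingHom.ext_int _ _)
  haveI : Module.Finite (ZMod p) (R ⧸ J) :=
    Module.Finite.of_restrictScalars_finite ℤ _ _
  have hint : IsIntegral (ZMod p) (Ideal.Quotient.mk J θ) := IsIntegral.of_finite _ _
  exact ⟨minpoly.monic hint, minpoly.irreducible hint⟩

lemma residuePoly_dvd {R : Type*} [CommRing R] (p : ℕ) [Fact p.Prime]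
    (J : Ideal R) [J.IsPrime] (h : ((p : ℕ) : R ⧸ J) = 0) (θ : R) {q : ℤ[X]}
    (hq : aeval θ q ∈ J) :
    residuePoly p J h θ ∣ q.map (Int.castRingHom (ZMod p)) := by
  letI : Algebra (ZMod p) (R ⧸ J) := (zmodHom p h).toAlgebra
  apply minpoly.dvd
  rw [aeval_map_intCast]
  have h5 := Polynomial.aeval_algHom_apply (Ideal.Quotient.mkₐ ℤ J) θ q
  simp only [Ideal.Quotient.mkₐ_eq_mk] at h5
  erw [h5]
  exact Ideal.Quotient.eq_zero_iff_mem.mpr hq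

lemma residuePoly_dvd_imp {R : Type*} [CommRing R] (p : ℕ) [Fact p.Prime]
    (J : Ideal R) [J.IsPrime] (h : ((p : ℕ) : R ⧸ J) = 0) (θ : R) {q : ℤ[X]}
    (hdvd : residuePoly p J h θ ∣ q.map (Int.castRingHom (ZMod p))) :
    aeval θ q ∈ J := by
  letI : Algebra (ZMod p) (R ⧸ J) := (zmodHom p h).toAlgebra
  obtain ⟨k, hk⟩ := hdvd
  have h0 : aeval (Ideal.Quotient.mk J θ) (q.map (Int.castRingHom (ZMod p))) = 0 := by
    rw [hk, map_mul]
    have : aeval (Ideal.Quotient.mk J θ) (residuePoly p J h θ) = 0 :=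
      minpoly.aeval (ZMod p) (Ideal.Quotient.mk J θ)
    rw [this, zero_mul]
  rw [aeval_map_intCast] at h0
  have h5 := Polynomial.aeval_algHom_apply (Ideal.Quotient.mkₐ ℤ J) θ q
  simp only [Ideal.Quotient.mkₐ_eq_mk] at h5
  erw [h5] at h0
  exact Ideal.Quotient.eq_zero_iff_mem.mp h0

set_option maxHeartbeats 1000000 in
lemma residuePoly_natDegree {R : Type*} [CommRing R] [IsDomain R] [Module.Finite ℤ R]
    (p : ℕ) [Fact p.Prime] (J : Ideal R) [J.IsMaximal]
    [J.LiesOver (Ideal.span {((p : ℕ) : ℤ)})]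
    (h : ((p : ℕ) : R ⧸ J) = 0) (θ : R)
    (hadj : Algebra.adjoin ℤ {Ideal.Quotient.mk J θ} = ⊤) :
    (residuePoly p J h θ).natDegree =
      Module.finrank (ℤ ⧸ Ideal.span {((p : ℕ) : ℤ)}) (R ⧸ J) := by
  letI : Algebra (ZMod p) (R ⧸ J) := (zmodHom p h).toAlgebra
  letI : Field (R ⧸ J) := Ideal.Quotient.field J
  haveI : Module.Finite ℤ (R ⧸ J) :=
    Module.Finite.of_surjective (Ideal.Quotient.mkₐ ℤ J).toLinearMap
      (Ideal.Quotient.mkₐ_surjective ℤ J)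
  letI : IsScalarTower ℤ (ZMod p) (R ⧸ J) :=
    IsScalarTower.of_algebraMap_eq' (RingHom.ext_int _ _)
  haveI : Module.Finite (ZMod p) (R ⧸ J) :=
    Module.Finite.of_restrictScalars_finite ℤ _ _
  have hint : IsIntegral (ZMod p) (Ideal.Quotient.mk J θ) := IsIntegral.of_finite _ _
  have hadj2 : Algebra.adjoin (ZMod p) {Ideal.Quotient.mk J θ} = ⊤ := by
    have hle : (⊤ : Subalgebra ℤ (R ⧸ J)) ≤
        Subalgebra.restrictScalars ℤ (Algebra.adjoin (ZMod p) {Ideal.Quotient.mk J θ}) := by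
      rw [← hadj]
      apply Algebra.adjoin_le
      intro x hx
      exact Algebra.subset_adjoin hx
    have h2 : Subalgebra.restrictScalars ℤ
        (Algebra.adjoin (ZMod p) {Ideal.Quotient.mk J θ}) = ⊤ := top_le_iff.mp hle
    apply Subalgebra.restrictScalars_injective ℤ
    rw [h2, Subalgebra.restrictScalars_top]
  have hIF : IntermediateField.adjoin (ZMod p) {Ideal.Quotient.mk J θ} = ⊤ :=
    IntermediateField.adjoin_eq_top_of_algebra (hS := hadj2)
  have h1 : (residuePoly p J h θ).natDegree = Module.finrank (ZMod p) (R ⧸ J) := by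
    show (minpoly (ZMod p) (Ideal.Quotient.mk J θ)).natDegree = _
    rw [← IntermediateField.adjoin.finrank hint, hIF, IntermediateField.finrank_top']
  rw [h1]
  have hrank : Module.rank (ℤ ⧸ Ideal.span {((p : ℕ) : ℤ)}) (R ⧸ J) =
      Module.rank (ZMod p) (R ⧸ J) := by
    refine Algebra.rank_eq_of_equiv_equiv (Int.quotientSpanNatEquivZMod p)
      (RingEquiv.refl (R ⧸ J)) ?_
    apply Ideal.Quotient.ringHom_ext
    exact RingHom.ext_int _ _
  exact (congrArg Cardinal.toNat hrank).symm

set_option maxHeartbeats 2000000 in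
set_option synthInstance.maxHeartbeats 400000 in
/-- Let `K` be a number field, `p` a rational prime, and `f` a positive integer. If the
number of prime ideals of `𝓞_K` lying above `p` with residue degree `f` exceeds the
number of monic irreducible polynomials of degree `f` over `𝔽_p`, then `p` divides the
index `(𝓞_K : ℤ[θ])` for every `θ ∈ 𝓞_K` generating `K` over `ℚ`. -/
theorem common_index_divisor
    {K : Type*} [Field K] [NumberField K] (p : ℕ) (hp : p.Prime) (f : ℕ) (hf : 0 < f)
    (h : Nat.card {P : Ideal (NumberField.RingOfIntegers K) //
          P.IsPrime ∧ P.LiesOver (Ideal.span {(p : ℤ)}) ∧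
            Ideal.inertiaDeg'
              (Ideal.span {(p : ℤ)}) P = f} >
        Nat.card {g : Polynomial (ZMod p) // g.Monic ∧ Irreducible g ∧ g.natDegree = f}) :
    ∀ θ : NumberField.RingOfIntegers K, Algebra.adjoin ℚ {(θ : K)} = ⊤ →
      p ∣ (Subalgebra.toSubmodule (Algebra.adjoin ℤ {θ})).toAddSubgroup.index := by
  intro θ _
  by_contra hpn
  haveI : Fact p.Prime := ⟨hp⟩
  haveI : NeZero p := ⟨hp.ne_zero⟩
  haveI hfin : Finite {g : Polynomial (ZMod p) // g.Monic ∧ Irreducible g ∧ g.natDegree = f} := by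
    apply Finite.of_injective
      (fun g : {g : Polynomial (ZMod p) // g.Monic ∧ Irreducible g ∧ g.natDegree = f} =>
        (fun i => g.1.coeff i : Fin (f + 1) → ZMod p))
    intro g₁ g₂ hg
    apply Subtype.ext
    apply Polynomial.ext
    intro i
    rcases le_or_gt i f with hi | hi
    · exact congrFun hg ⟨i, Nat.lt_succ_of_le hi⟩
    · rw [Polynomial.coeff_eq_zero_of_natDegree_lt, Polynomial.coeff_eq_zero_of_natDegree_lt]
      · rw [g₂.2.2.2]; exact hi
      · rw [g₁.2.2.2]; exact hi
  haveI hmaxp : (Ideal.span {((p : ℕ) : ℤ)}).IsMaximal :=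
    PrincipalIdealRing.isMaximal_of_irreducible (Nat.prime_iff_prime_int.mp hp).irreducible
  have hpmem : ∀ P : {P : Ideal (NumberField.RingOfIntegers K) //
      P.IsPrime ∧ P.LiesOver (Ideal.span {(p : ℤ)}) ∧
        Ideal.inertiaDeg'
          (Ideal.span {(p : ℤ)}) P = f},
      ((p : ℕ) : NumberField.RingOfIntegers K) ∈ P.1 := by
    intro P
    haveI := P.2.2.1
    have h1 : ((p : ℕ) : ℤ) ∈ Ideal.span {((p : ℕ) : ℤ)} := Ideal.mem_span_singleton_self _
    have h2 := (Ideal.mem_of_liesOver P.1 (Ideal.span {((p : ℕ) : ℤ)}) ((p : ℕ) : ℤ)).mp h1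
    simpa using h2
  have h0 : ∀ P : {P : Ideal (NumberField.RingOfIntegers K) //
      P.IsPrime ∧ P.LiesOver (Ideal.span {(p : ℤ)}) ∧
        Ideal.inertiaDeg'
          (Ideal.span {(p : ℤ)}) P = f},
      ((p : ℕ) : NumberField.RingOfIntegers K ⧸ P.1) = 0 := by
    intro P
    rw [← map_natCast (Ideal.Quotient.mk P.1)]
    exact Ideal.Quotient.eq_zero_iff_mem.mpr (hpmem P)
  have hmaxP : ∀ P : {P : Ideal (NumberField.RingOfIntegers K) //
      P.IsPrime ∧ P.LiesOver (Ideal.span {(p : ℤ)}) ∧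
        Ideal.inertiaDeg'
          (Ideal.span {(p : ℤ)}) P = f},
      P.1.IsMaximal := by
    intro P
    haveI := P.2.1
    apply Ideal.IsPrime.isMaximal P.2.1
    intro hbot
    have hmem := hpmem P
    rw [hbot, Ideal.mem_bot] at hmem
    exact hp.ne_zero (Nat.cast_eq_zero.mp hmem)
  have key : ∀ J : Ideal (NumberField.RingOfIntegers K),
      ((p : ℕ) : NumberField.RingOfIntegers K) ∈ J →
      Algebra.adjoin ℤ {Ideal.Quotient.mk J θ} = ⊤ :=
    fun J hJ => adjoin_quot_top hp hpn J hJ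
  let Φ : {P : Ideal (NumberField.RingOfIntegers K) //
      P.IsPrime ∧ P.LiesOver (Ideal.span {(p : ℤ)}) ∧
        Ideal.inertiaDeg'
          (Ideal.span {(p : ℤ)}) P = f} →
      {g : Polynomial (ZMod p) // g.Monic ∧ Irreducible g ∧ g.natDegree = f} := fun P =>
    ⟨residuePoly p P.1 (h0 P) θ, by
      haveI := P.2.1
      haveI := P.2.2.1
      haveI := hmaxP P
      have hmi := residuePoly_monic_irred p P.1 (h0 P) θ
      have hdeg := P.2.2.2
      rw [Ideal.inertiaDeg_algebraMap] at hdeg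
      refine ⟨hmi.1, hmi.2, ?_⟩
      rw [residuePoly_natDegree p P.1 (h0 P) θ (key P.1 (hpmem P))]
      exact hdeg⟩
  have hinj : Function.Injective Φ := by
    intro P Q hPQ
    have hres : residuePoly p P.1 (h0 P) θ = residuePoly p Q.1 (h0 Q) θ :=
      congrArg Subtype.val hPQ
    apply Subtype.ext
    by_contra hne
    haveI := P.2.1
    haveI := Q.2.1
    have hsup : P.1 ⊔ Q.1 = ⊤ := (hmaxP P).coprime_of_ne (hmaxP Q) hne
    have h1 : (1 : NumberField.RingOfIntegers K) ∈ P.1 ⊔ Q.1 := by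
      rw [hsup]; trivial
    obtain ⟨a, ha, b, hb, hab⟩ := Submodule.mem_sup.mp h1
    have hpJ : ((p : ℕ) : NumberField.RingOfIntegers K) ∈ P.1 ⊓ Q.1 := ⟨hpmem P, hpmem Q⟩
    have hadjJ := key (P.1 ⊓ Q.1) hpJ
    have hmem : Ideal.Quotient.mk (P.1 ⊓ Q.1) a ∈
        Algebra.adjoin ℤ {Ideal.Quotient.mk (P.1 ⊓ Q.1) θ} := by
      rw [hadjJ]; trivial
    rw [Algebra.adjoin_singleton_eq_range_aeval] at hmem
    obtain ⟨q, hq⟩ := hmem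
    have h5 := Polynomial.aeval_algHom_apply (Ideal.Quotient.mkₐ ℤ (P.1 ⊓ Q.1)) θ q
    simp only [Ideal.Quotient.mkₐ_eq_mk] at h5
    have hq' : aeval (Ideal.Quotient.mk (P.1 ⊓ Q.1) θ) q = Ideal.Quotient.mk (P.1 ⊓ Q.1) a := hq
    have hq2 : aeval θ q - a ∈ P.1 ⊓ Q.1 := by
      rw [← Ideal.Quotient.eq_zero_iff_mem, map_sub, ← h5, hq', sub_self]
    have haP : aeval θ q ∈ P.1 := by
      have heq : aeval θ q = (aeval θ q - a) + a := by ring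
      rw [heq]
      exact Ideal.add_mem _ hq2.1 ha
    have hdvdP := residuePoly_dvd p P.1 (h0 P) θ haP
    rw [hres] at hdvdP
    have haQ : aeval θ q ∈ Q.1 := residuePoly_dvd_imp p Q.1 (h0 Q) θ hdvdP
    have haQ2 : a ∈ Q.1 := by
      have heq : a = aeval θ q - (aeval θ q - a) := by ring
      rw [heq]
      exact Ideal.sub_mem _ haQ hq2.2
    have hone : (1 : NumberField.RingOfIntegers K) ∈ Q.1 := by
      rw [← hab]
      exact Ideal.add_mem _ haQ2 hb
    exact (hmaxP Q).ne_top ((Ideal.eq_top_iff_one _).mpr hone)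
  exact absurd (Nat.card_le_card_of_injective Φ hinj) (not_le.mpr h)
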